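/- Let G be a field of characteristic p > 0 and let M/G be a finite separable field extension. Let α ∈ M and let a be a positive integer. If every coefficient of the monic irreducible (minimal) polynomial of α over G is a p^a-th power of an element of G, then α is a p^a-th power of an element of M. -/

import Mathlib

/-- Let `M/G` be a finite separable extension of fields of characteristic `p > 0` and
let `a ≥ 1`. If every coefficient of the minimal polynomial of `α ∈ M` over `G` is a
`p^a`-th power in `G`, then `α` is a `p^a`-th power in `M`. -/
theorem stmt_3 {G M : Type*} [Field G] [Field M] [Algebra G M]
    (p : ℕ) (hp : p.Prime) [CharP G p]
    [FiniteDimensional G M] [Algebra.IsSeparable G M]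
    (α : M) (a : ℕ) (ha : 1 ≤ a)
    (hcoeff : ∀ i : ℕ, ∃ c : G, (minpoly G α).coeff i = c ^ p ^ a) :
    ∃ β : M, α = β ^ p ^ a := by
  classical
  have hfact : Fact p.Prime := ⟨hp⟩
  have hα : IsIntegral G α := Algebra.IsIntegral.isIntegral α
  set f := minpoly G α with hfdef
  have hfmonic : f.Monic := minpoly.monic hα
  have hfirr : Irreducible f := minpoly.irreducible hα
  choose c hc using hcoeff
  have hc0 : ∀ i, f.coeff i = 0 → c i = 0 := by
    intro i h
    have h2 : c i ^ p ^ a = 0 := by rw [← hc i]; exact h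
    exact pow_eq_zero_iff (pow_ne_zero a hp.ne_zero) |>.mp h2
  set φ : G →+* G := iterateFrobenius G p a with hφdef
  set g : Polynomial G := ∑ i ∈ f.support, Polynomial.C (c i) * Polynomial.X ^ i with hgdef
  have hgcoeff : ∀ i, g.coeff i = c i := by
    intro i
    rw [hgdef, Polynomial.finset_sum_coeff]
    by_cases h : i ∈ f.support
    · rw [Finset.sum_eq_single i]
      · simp
      · intro b _ hb
        rw [Polynomial.coeff_C_mul, Polynomial.coeff_X_pow, if_neg (Ne.symm hb), mul_zero]
      · intro h'; exact absurd h h'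
    · rw [Finset.sum_eq_zero, (hc0 i (Polynomial.notMem_support_iff.mp h))]
      intro b hb
      have hbi : b ≠ i := by
        rintro rfl; exact h hb
      rw [Polynomial.coeff_C_mul, Polynomial.coeff_X_pow, if_neg (Ne.symm hbi), mul_zero]
  have hmap : g.map φ = f := by
    ext i
    rw [Polynomial.coeff_map, hgcoeff]
    show (c i) ^ p ^ a = f.coeff i
    exact (hc i).symm
  have hφinj : Function.Injective φ := φ.injective
  have hdeg : g.natDegree = f.natDegree := by
    rw [← hmap, Polynomial.natDegree_map_eq_of_injective hφinj]
  have hgmonic : g.Monic := by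
    rw [hφinj.monic_map_iff, hmap]; exact hfmonic
  have hfdeg : 0 < f.natDegree := minpoly.natDegree_pos hα
  have hg0 : g ≠ 0 := hgmonic.ne_zero
  -- find a root of g in the algebraic closure of G
  set K := AlgebraicClosure G with hK
  have hKchar : CharP K p := charP_of_injective_algebraMap (algebraMap G K).injective p
  obtain ⟨β, hβ⟩ : ∃ β : K, Polynomial.aeval β g = 0 := by
    apply IsAlgClosed.exists_aeval_eq_zero
    rw [Polynomial.degree_eq_natDegree hg0]
    simp only [ne_eq, Nat.cast_eq_zero]
    omega
  have hcomp : (algebraMap G K).comp φ = (iterateFrobenius K p a).comp (algebraMap G K) := by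
    ext x
    simp [hφdef, iterateFrobenius_def, map_pow]
  have key : Polynomial.aeval (β ^ p ^ a) f = 0 := by
    have hβq : β ^ p ^ a = iterateFrobenius K p a β := rfl
    rw [← hmap, Polynomial.aeval_def, Polynomial.eval₂_map, hcomp, hβq,
      ← Polynomial.hom_eval₂]
    rw [Polynomial.aeval_def] at hβ
    rw [hβ, map_zero]
  have hβqint : IsIntegral G (β ^ p ^ a) := ⟨f, hfmonic, by rwa [← Polynomial.aeval_def]⟩
  have hβint : IsIntegral G β := ⟨g, hgmonic, by rwa [← Polynomial.aeval_def]⟩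
  have hmin : minpoly G (β ^ p ^ a) = f :=
    (minpoly.eq_of_irreducible_of_monic hfirr key hfmonic).symm
  haveI : FiniteDimensional G (IntermediateField.adjoin G {β}) :=
    IntermediateField.adjoin.finiteDimensional hβint
  have hle : IntermediateField.adjoin G {β ^ p ^ a} ≤ IntermediateField.adjoin G {β} := by
    rw [IntermediateField.adjoin_simple_le_iff]
    exact pow_mem (IntermediateField.mem_adjoin_simple_self G β) _
  have hfr1 : Module.finrank G (IntermediateField.adjoin G {β ^ p ^ a}) = f.natDegree := by
    rw [IntermediateField.adjoin.finrank hβqint, hmin]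
  have hfr2 : Module.finrank G (IntermediateField.adjoin G {β}) ≤ f.natDegree := by
    rw [IntermediateField.adjoin.finrank hβint, ← hdeg]
    exact Polynomial.natDegree_le_of_dvd (minpoly.dvd G β hβ) hg0
  have heq : IntermediateField.adjoin G {β ^ p ^ a} = IntermediateField.adjoin G {β} :=
    IntermediateField.eq_of_le_of_finrank_le hle (by rw [hfr1]; exact hfr2)
  have hβmem : β ∈ IntermediateField.adjoin G {β ^ p ^ a} := by
    rw [heq]; exact IntermediateField.mem_adjoin_simple_self G β
  -- build the algebra homomorphism into M
  set e := IntermediateField.adjoinRootEquivAdjoin G hβqint with hedef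
  have haevalα : Polynomial.aeval α (minpoly G (β ^ p ^ a)) = 0 := by
    rw [hmin]; exact minpoly.aeval G α
  set lift := AdjoinRoot.liftAlgHom (minpoly G (β ^ p ^ a)) (Algebra.ofId G M) α haevalα with hliftdef
  set θ : IntermediateField.adjoin G {β ^ p ^ a} →ₐ[G] M := lift.comp e.symm.toAlgHom with hθdef
  refine ⟨θ ⟨β, hβmem⟩, ?_⟩
  have hpow : (⟨β, hβmem⟩ : IntermediateField.adjoin G {β ^ p ^ a}) ^ p ^ a
      = IntermediateField.AdjoinSimple.gen G (β ^ p ^ a) := by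
    ext
    push_cast
    rfl
  rw [← map_pow, hpow]
  have hgen : e (AdjoinRoot.root (minpoly G (β ^ p ^ a)))
      = IntermediateField.AdjoinSimple.gen G (β ^ p ^ a) :=
    IntermediateField.adjoinRootEquivAdjoin_apply_root G hβqint
  have : θ (IntermediateField.AdjoinSimple.gen G (β ^ p ^ a)) = α := by
    rw [hθdef, AlgHom.comp_apply, ← hgen]
    rw [AlgEquiv.toAlgHom_apply, AlgEquiv.symm_apply_apply]
    rw [hliftdef]
    exact AdjoinRoot.liftAlgHom_root _ _ _ haevalα
  rw [this]
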